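/- There exists a constant c > 0 such that for all integers N ≥ 2 and all integers n with 1 ≤ n ≤ N−1, | −∑_{j=1}^n log( 2 sin(jπ/N) ) − (N/π)·Λ(nπ/N) | ≤ c · log N, where Λ is the Lobachevsky function. -/

import Mathlib

open Real MeasureTheory Finset intervalIntegral Set

set_option maxHeartbeats 1000000


lemma abs_log_le {x : ℝ} (hx0 : 0 < x) (hx2 : x ≤ 2) :
    |Real.log x| ≤ 2 * x ^ (-(1/2) : ℝ) := by
  have ht : (0:ℝ) < x ^ (-(1/2) : ℝ) := Real.rpow_pos_of_pos hx0 _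
  rcases le_or_gt x 1 with hx1 | hx1
  · rw [abs_of_nonpos (Real.log_nonpos (le_of_lt hx0) hx1)]
    have h1 : Real.log (x ^ (-(1/2) : ℝ)) ≤ x ^ (-(1/2) : ℝ) - 1 :=
      Real.log_le_sub_one_of_pos ht
    rw [Real.log_rpow hx0] at h1
    nlinarith
  · rw [abs_of_nonneg (Real.log_nonneg hx1.le)]
    have h1 : Real.log x ≤ x - 1 := Real.log_le_sub_one_of_pos hx0
    have h2 : x ^ (-(1/2) : ℝ) ≥ 2 ^ (-(1/2) : ℝ) := by
      apply Real.rpow_le_rpow_of_nonpos hx0 hx2 (by norm_num)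
    have h3 : (2:ℝ) ^ ((1/2) : ℝ) ≤ 2 := by
      calc (2:ℝ) ^ ((1/2):ℝ) ≤ 2 ^ (1:ℝ) :=
            Real.rpow_le_rpow_of_exponent_le (by norm_num) (by norm_num)
        _ = 2 := by norm_num
    have h4 : (2:ℝ) ^ (-(1/2) : ℝ) = ((2:ℝ) ^ ((1/2):ℝ))⁻¹ := by
      rw [← Real.rpow_neg (by norm_num : (0:ℝ) ≤ 2)]
    have h5 : (0:ℝ) < (2:ℝ) ^ ((1/2):ℝ) := Real.rpow_pos_of_pos (by norm_num) _
    have h6 : (2:ℝ) ^ (-(1/2) : ℝ) ≥ 1/2 := by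
      rw [h4]; rw [ge_iff_le, le_inv_comm₀ (by norm_num) h5]
      calc (2:ℝ)^((1/2):ℝ) ≤ 2 := h3
        _ ≤ (1/2:ℝ)⁻¹ := by norm_num
    nlinarith

lemma integrableLog {h : ℝ} (h0 : 0 ≤ h) (h2 : h ≤ 2) :
    IntervalIntegrable Real.log volume 0 h := by
  have hg : IntervalIntegrable (fun x : ℝ => 2 * x ^ (-(1/2) : ℝ)) volume 0 h :=
    (intervalIntegral.intervalIntegrable_rpow' (by norm_num)).const_mul 2
  apply hg.mono_fun' Real.measurable_log.aestronglyMeasurable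
  rw [Filter.EventuallyLE, ae_restrict_iff' measurableSet_uIoc]
  filter_upwards with x hx
  rw [Set.uIoc_of_le h0] at hx
  exact abs_log_le hx.1 (hx.2.trans h2)

lemma sin2_lb {u : ℝ} (hu : 0 ≤ u) (hu2 : u ≤ π/2) : u ≤ 2 * Real.sin u := by
  have hπ : 0 < π := Real.pi_pos
  have h1 : 2 * u ≤ Real.sin u * π := by
    have h := Real.mul_le_sin hu hu2
    calc 2 * u = (2/π*u) * π := by field_simp
      _ ≤ Real.sin u * π := by nlinarith
  have h4 : 0 ≤ u * (4 - π) := mul_nonneg hu (by nlinarith [Real.pi_le_four])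
  nlinarith [mul_pos hπ hπ]

lemma sin2_ub {u : ℝ} (hu : 0 ≤ u) : 2 * Real.sin u ≤ 2 * u := by
  rcases eq_or_lt_of_le hu with rfl | hu
  · simp
  · nlinarith [Real.sin_lt hu]

lemma integrableF {h : ℝ} (h0 : 0 ≤ h) (h2 : h ≤ π/2) :
    IntervalIntegrable (fun u => Real.log (2 * Real.sin u)) volume 0 h := by
  have h2' : h ≤ 2 := by have := Real.pi_le_four; linarith
  have hg : IntervalIntegrable (fun x : ℝ => |Real.log x| + Real.log 2) volume 0 h :=
    (integrableLog h0 h2').abs.add intervalIntegrable_const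
  apply hg.mono_fun'
  · apply Measurable.aestronglyMeasurable
    exact Real.measurable_log.comp (measurable_const.mul Real.measurable_sin)
  · rw [Filter.EventuallyLE, ae_restrict_iff' measurableSet_uIoc]
    filter_upwards with x hx
    rw [Set.uIoc_of_le h0] at hx
    obtain ⟨hx0, hxh⟩ := hx
    have hxpi : x ≤ π/2 := hxh.trans h2
    have hlb : x ≤ 2 * Real.sin x := sin2_lb hx0.le hxpi
    have hub : 2 * Real.sin x ≤ 2 * x := sin2_ub hx0.le
    have hs : 0 < 2 * Real.sin x := lt_of_lt_of_le hx0 hlb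
    have h1 : Real.log (2 * Real.sin x) ≤ Real.log 2 + Real.log x := by
      calc Real.log (2 * Real.sin x) ≤ Real.log (2 * x) := Real.log_le_log hs hub
        _ = Real.log 2 + Real.log x := Real.log_mul (by norm_num) hx0.ne'
    have h1' : Real.log x ≤ Real.log (2 * Real.sin x) := Real.log_le_log hx0 hlb
    simp only [Real.norm_eq_abs]
    rw [abs_le]
    constructor
    · have : -|Real.log x| ≤ Real.log x := neg_abs_le _
      have h2l : (0:ℝ) ≤ Real.log 2 := Real.log_nonneg (by norm_num)
      linarith
    · have : Real.log x ≤ |Real.log x| := le_abs_self _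
      linarith

lemma integral_log_eq {h : ℝ} (h0 : 0 ≤ h) (h2 : h ≤ 2) :
    ∫ u in (0:ℝ)..h, Real.log u = h * Real.log h - h := by
  have hF : ContinuousOn (fun x : ℝ => x * Real.log x - x) (Set.Icc 0 h) :=
    (Real.continuous_mul_log.sub continuous_id).continuousOn
  have := intervalIntegral.integral_eq_sub_of_hasDeriv_right_of_le h0 hF
    (f' := Real.log) ?_ (integrableLog h0 h2)
  · simpa using this
  · intro x hx
    have hx0 : x ≠ 0 := (ne_of_gt hx.1)
    have : HasDerivAt (fun x : ℝ => x * Real.log x - x) (Real.log x) x := by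
      have := (Real.hasDerivAt_mul_log hx0).sub (hasDerivAt_id x)
      simpa [Pi.sub_def] using this
    exact this.hasDerivWithinAt

lemma cot_half {y : ℝ} (h1 : 0 < y) (h2 : y ≤ π/2) : y * Real.cos y ≤ Real.sin y := by
  rcases lt_or_eq_of_le h2 with h2' | rfl
  · have hc : 0 < Real.cos y := Real.cos_pos_of_mem_Ioo ⟨by linarith [Real.pi_pos], h2'⟩
    have ht := Real.lt_tan h1 h2'
    rw [Real.tan_eq_sin_div_cos] at ht
    rw [lt_div_iff₀ hc] at ht
    linarith
  · simp [Real.cos_pi_div_two]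

lemma cot_bound {x : ℝ} (h1 : 0 < x) (h2 : x < π) :
    |Real.cos x / Real.sin x| ≤ 1/x + 1/(π - x) := by
  have hs : 0 < Real.sin x := Real.sin_pos_of_pos_of_lt_pi h1 h2
  rcases le_or_gt x (π/2) with hx | hx
  · have hc : 0 ≤ Real.cos x := Real.cos_nonneg_of_mem_Icc ⟨by linarith [Real.pi_pos], hx⟩
    rw [abs_of_nonneg (div_nonneg hc hs.le)]
    have hk := cot_half h1 hx
    have : Real.cos x / Real.sin x ≤ 1/x := by
      rw [div_le_div_iff₀ hs h1]; nlinarith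
    have hpx : 0 < π - x := by linarith
    have hpos : 0 < 1/(π - x) := by positivity
    linarith
  · set y := π - x with hy
    have hy1 : 0 < y := by simp [hy]; linarith
    have hy2 : y ≤ π/2 := by simp [hy]; linarith
    have hsy : Real.sin x = Real.sin y := by rw [hy, Real.sin_pi_sub]
    have hcy : Real.cos x = -Real.cos y := by
      rw [hy, Real.cos_pi_sub, neg_neg]
    have hcy0 : 0 ≤ Real.cos y := Real.cos_nonneg_of_mem_Icc ⟨by linarith [Real.pi_pos], hy2⟩
    have hsy0 : 0 < Real.sin y := by rw [← hsy]; exact hs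
    have : |Real.cos x / Real.sin x| = Real.cos y / Real.sin y := by
      rw [hcy, hsy, neg_div, abs_neg, abs_of_nonneg (div_nonneg hcy0 hsy0.le)]
    rw [this]
    have hk := cot_half hy1 hy2
    have : Real.cos y / Real.sin y ≤ 1/y := by
      rw [div_le_div_iff₀ hsy0 hy1]; nlinarith
    have hpos : 0 < 1/x := by positivity
    linarith

lemma harm_bound {N : ℕ} {s : Finset ℕ} (hs : s ⊆ Finset.Icc 1 N) :
    ∑ i ∈ s, (1/(i:ℝ)) ≤ 1 + Real.log N := by
  have h1 : ∑ i ∈ s, (1/(i:ℝ)) ≤ ∑ i ∈ Finset.Icc 1 N, (1/(i:ℝ)) := by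
    apply Finset.sum_le_sum_of_subset_of_nonneg hs
    intro i _ _; positivity
  have h2 : ∑ i ∈ Finset.Icc 1 N, (1/(i:ℝ)) = (harmonic N : ℝ) := by
    rw [harmonic]
    push_cast
    rw [← Finset.Ico_add_one_right_eq_Icc, Finset.sum_Ico_eq_sum_range]
    simp [add_comm]
  calc ∑ i ∈ s, (1/(i:ℝ)) ≤ (harmonic N : ℝ) := by rw [← h2]; exact h1
    _ ≤ 1 + Real.log N := harmonic_le_one_add_log N

/-- The Lobachevsky function `Λ(x) = -∫₀ˣ log|2 sin u| du`. -/
noncomputable def Lob (x : ℝ) : ℝ := - ∫ u in (0 : ℝ)..x, Real.log |2 * Real.sin u|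

/-- The standard estimate `s_n := -∑_{j=1}^n log(2 sin(jπ/N)) = (N/π)Λ(nπ/N) + O(log N)`,
uniformly in `1 ≤ n ≤ N-1`. -/
theorem log_sin_sum_estimate :
    ∃ c : ℝ, 0 < c ∧ ∀ N : ℕ, 2 ≤ N → ∀ n : ℕ, 1 ≤ n → n ≤ N - 1 →
      |(-∑ j ∈ Finset.Icc 1 n, Real.log (2 * Real.sin (j * Real.pi / N))) -
          ((N : ℝ) / Real.pi) * Lob (n * Real.pi / N)| ≤ c * Real.log N := by
  refine ⟨20, by norm_num, ?_⟩
  intro N hN n hn1 hn2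
  set f : ℝ → ℝ := fun u => Real.log (2 * Real.sin u) with hf
  have hπ : 0 < π := Real.pi_pos
  have hπ4 : π ≤ 4 := by linarith [Real.pi_le_four]
  have hN0 : (0:ℝ) < N := by positivity
  have hN2 : (2:ℝ) ≤ N := by exact_mod_cast hN
  set h : ℝ := π / N with hh
  have hh0 : 0 < h := by positivity
  have hh2 : h ≤ π/2 := by
    rw [hh, div_le_div_iff₀ hN0 (by norm_num)]; nlinarith
  have hh2' : h ≤ 2 := by linarith
  have hNh : (N:ℝ) * h = π := by rw [hh]; field_simp
  have hn' : (n:ℝ) ≤ (N:ℝ) - 1 := by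
    have : n ≤ N - 1 := hn2
    have : (n:ℝ) ≤ ((N-1 : ℕ):ℝ) := by exact_mod_cast this
    rwa [Nat.cast_sub (by omega), Nat.cast_one] at this
  set L := Real.log N with hL
  have hlog2 : Real.log 2 ≤ L := Real.log_le_log (by norm_num) hN2
  have hlog2' : (0.6931471803 : ℝ) < Real.log 2 := Real.log_two_gt_d9
  have hL0 : 0 < L := by linarith
  -- integrability on each subinterval
  have hint : ∀ k : ℕ, (k:ℝ)*h ≥ 0 → ((k:ℝ)+1)*h < π →
      IntervalIntegrable f volume ((k:ℝ)*h) (((k:ℝ)+1)*h) := by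
    intro k hk0 hk1
    rcases Nat.eq_zero_or_pos k with rfl | hk
    · simpa using integrableF hh0.le hh2
    · have hk' : (1:ℝ) ≤ (k:ℝ) := by exact_mod_cast hk
      apply ContinuousOn.intervalIntegrable
      apply ContinuousOn.log (Continuous.continuousOn (by continuity))
      intro x hx
      rw [Set.uIcc_of_le (by nlinarith)] at hx
      have hx1 : 0 < x := lt_of_lt_of_le (by nlinarith) hx.1
      have hx2 : x < π := by nlinarith [hx.2]
      have := Real.sin_pos_of_pos_of_lt_pi hx1 hx2
      positivity
  have hintk : ∀ k < n, IntervalIntegrable f volume ((k:ℝ)*h) ((((k+1):ℕ) :ℝ)*h) := by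
    intro k hk
    have h1 : ((k:ℝ)+1)*h < π := by
      have h2 : (k:ℝ) + 1 ≤ (N:ℝ) - 1 := by
        have : (k:ℝ) + 1 ≤ (n:ℝ) := by exact_mod_cast hk
        linarith
      nlinarith
    have := hint k (by positivity) h1
    push_cast
    exact this
  -- the decomposition of the integral
  have hsum : ∑ k ∈ Finset.range n, ∫ u in ((k:ℝ)*h)..(((k:ℝ)+1)*h), f u
      = ∫ u in (0:ℝ)..((n:ℝ)*h) , f u := by
    have := intervalIntegral.sum_integral_adjacent_intervals (a := fun k : ℕ => (k:ℝ)*h)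
      (μ := volume) (f := f) (n := n) ?_
    · push_cast at this
      simpa using this
    · intro k hk; exact hintk k hk
  -- Lob identity
  have hLob : Lob ((n:ℝ) * π / N) = - ∫ u in (0:ℝ)..((n:ℝ)*h), f u := by
    have harg : (n:ℝ) * π / N = (n:ℝ)*h := by rw [hh]; ring
    rw [harg, Lob]
    congr 1
    apply intervalIntegral.integral_congr
    intro u hu
    rw [Set.uIcc_of_le (by positivity)] at hu
    have hu2 : u ≤ π := by nlinarith [hu.2, hn']
    have hs : 0 ≤ Real.sin u := Real.sin_nonneg_of_nonneg_of_le_pi hu.1 hu2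
    have habs : |2 * Real.sin u| = 2 * Real.sin u := abs_of_nonneg (by linarith)
    show Real.log |2 * Real.sin u| = Real.log (2 * Real.sin u)
    rw [habs]
  -- rewrite the sum
  have hsum2 : ∑ j ∈ Finset.Icc 1 n, Real.log (2*Real.sin ((j:ℝ) * π / N))
      = ∑ k ∈ Finset.range n, f (((k:ℝ)+1)*h) := by
    rw [← Finset.Ico_add_one_right_eq_Icc, Finset.sum_Ico_eq_sum_range]
    norm_num
    apply Finset.sum_congr rfl
    intro i _
    have harg : (1+(i:ℝ)) * π / N = ((i:ℝ)+1)*h := by rw [hh]; ring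
    rw [harg]
  have hNπ : (N:ℝ)/π = 1/h := by rw [hh, one_div_div]
  have key_eq : (-∑ j ∈ Finset.Icc 1 n, Real.log (2 * Real.sin (j * π / N))) -
      ((N:ℝ)/π) * Lob ((n:ℝ) * π / N)
      = - ∑ k ∈ Finset.range n,
          (f (((k:ℝ)+1)*h) - (1/h) * ∫ u in ((k:ℝ)*h)..(((k:ℝ)+1)*h), f u) := by
    rw [hLob, hNπ, Finset.sum_sub_distrib, ← Finset.mul_sum, hsum, hsum2]
    ring
  rw [key_eq, abs_neg]
  -- per-interval bound, k ≥ 1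
  have hbound : ∀ k : ℕ, 1 ≤ k → k < n →
      |f (((k:ℝ)+1)*h) - (1/h) * ∫ u in ((k:ℝ)*h)..(((k:ℝ)+1)*h), f u|
        ≤ 1/(k:ℝ) + 1/((N:ℝ)-1-(k:ℝ)) := by
    intro k hk1 hkn
    set a := (k:ℝ)*h with ha_eq
    set b := ((k:ℝ)+1)*h with hb_eq
    have hk1' : (1:ℝ) ≤ (k:ℝ) := by exact_mod_cast hk1
    have hkN : (k:ℝ) + 1 ≤ (N:ℝ) - 1 := by
      have : (k:ℝ) + 1 ≤ (n:ℝ) := by exact_mod_cast hkn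
      linarith
    have hNk : (1:ℝ) ≤ (N:ℝ) - 1 - (k:ℝ) := by linarith
    have ha0 : 0 < a := by rw [ha_eq]; nlinarith
    have hab : a < b := by rw [ha_eq, hb_eq]; nlinarith
    have hba : b - a = h := by rw [ha_eq, hb_eq]; ring
    have hbπ : b < π := by rw [hb_eq, ← hNh]; nlinarith
    have hπb : 0 < π - b := by linarith
    set K := 1/a + 1/(π - b) with hK_eq
    have hK0 : 0 ≤ K := by positivity
    have hderiv : ∀ x ∈ Set.Icc a b, HasDerivWithinAt f (Real.cos x / Real.sin x)
        (Set.Icc a b) x := by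
      intro x hx
      have hx1 : 0 < x := lt_of_lt_of_le ha0 hx.1
      have hx2 : x < π := lt_of_le_of_lt hx.2 hbπ
      have hsx : 0 < Real.sin x := Real.sin_pos_of_pos_of_lt_pi hx1 hx2
      have hd : HasDerivAt (fun u => 2 * Real.sin u) (2 * Real.cos x) x :=
        (Real.hasDerivAt_sin x).const_mul 2
      have hd2 := hd.log (ne_of_gt (by linarith : (0:ℝ) < 2*Real.sin x))
      have he : (2*Real.cos x) / (2*Real.sin x) = Real.cos x / Real.sin x :=
        mul_div_mul_left _ _ two_ne_zero
      rw [he] at hd2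
      exact hd2.hasDerivWithinAt
    have hbd : ∀ x ∈ Set.Icc a b, ‖Real.cos x / Real.sin x‖ ≤ K := by
      intro x hx
      have hx1 : 0 < x := lt_of_lt_of_le ha0 hx.1
      have hx2 : x < π := lt_of_le_of_lt hx.2 hbπ
      rw [Real.norm_eq_abs]
      refine (cot_bound hx1 hx2).trans ?_
      have l1 : 1/x ≤ 1/a := one_div_le_one_div_of_le ha0 hx.1
      have l2 : 1/(π-x) ≤ 1/(π-b) := one_div_le_one_div_of_le hπb (by linarith [hx.2])
      rw [hK_eq]; linarith
    have hmvt : ∀ x ∈ Set.Icc a b, ∀ y ∈ Set.Icc a b, ‖f y - f x‖ ≤ K * ‖y - x‖ :=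
      fun x hx y hy =>
        (convex_Icc a b).norm_image_sub_le_of_norm_hasDerivWithin_le hderiv hbd hx hy
    have hIb : IntervalIntegrable f volume a b := by
      have := hintk k hkn
      push_cast at this
      rw [ha_eq, hb_eq]; exact this
    have hdiff : (∫ u in a..b, (f b - f u)) = (b-a) * f b - ∫ u in a..b, f u := by
      rw [intervalIntegral.integral_sub intervalIntegrable_const hIb,
        intervalIntegral.integral_const, smul_eq_mul]
    have hnorm : |∫ u in a..b, (f b - f u)| ≤ (K*h) * |b - a| := by
      rw [← Real.norm_eq_abs]
      apply intervalIntegral.norm_integral_le_of_norm_le_const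
      intro u hu
      rw [Set.uIoc_of_le hab.le] at hu
      have hu' : u ∈ Set.Icc a b := ⟨hu.1.le, hu.2⟩
      have hb' : b ∈ Set.Icc a b := ⟨hab.le, le_refl b⟩
      have h1 : ‖f b - f u‖ ≤ K * ‖b - u‖ := hmvt u hu' b hb'
      have h2 : ‖b - u‖ ≤ h := by
        rw [Real.norm_eq_abs, abs_of_nonneg (by linarith [hu.2])]
        linarith [hu.1]
      calc ‖f b - f u‖ ≤ K * ‖b - u‖ := h1
        _ ≤ K * h := by nlinarith
    have ht : f b - (1/h) * ∫ u in a..b, f u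
        = (1/h) * ((b-a) * f b - ∫ u in a..b, f u) := by
      rw [hba, mul_sub, ← mul_assoc]
      field_simp
    rw [ht, ← hdiff, abs_mul, abs_of_nonneg (by positivity : (0:ℝ) ≤ 1/h)]
    have habs : |b - a| = h := by rw [hba, abs_of_nonneg hh0.le]
    have hfin : 1/h * |∫ u in a..b, (f b - f u)| ≤ K * h := by
      calc 1/h * |∫ u in a..b, (f b - f u)| ≤ 1/h * ((K*h) * h) := by
            rw [habs] at hnorm
            apply mul_le_mul_of_nonneg_left hnorm (by positivity)
        _ = K * h := by field_simp
    refine hfin.trans ?_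
    have e1 : 1/a * h = 1/(k:ℝ) := by
      rw [ha_eq]
      have : (k:ℝ) ≠ 0 := by linarith
      field_simp
    have hπb2 : π - b = ((N:ℝ)-1-(k:ℝ))*h := by rw [hb_eq, ← hNh]; ring
    have e2 : 1/(π-b) * h = 1/((N:ℝ)-1-(k:ℝ)) := by
      rw [hπb2]
      have : (N:ℝ)-1-(k:ℝ) ≠ 0 := by linarith
      field_simp
    have : K * h = 1/(k:ℝ) + 1/((N:ℝ)-1-(k:ℝ)) := by
      rw [hK_eq, add_mul, e1, e2]
    linarith
  -- the k = 0 term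
  have ht0 : |f h - (1/h) * ∫ u in (0:ℝ)..h, f u| ≤ 7*L := by
    have hJint : IntervalIntegrable f volume 0 h := integrableF hh0.le hh2
    have hlogint' : IntervalIntegrable Real.log volume 0 h := integrableLog hh0.le hh2'
    have hsinh : 0 < Real.sin h := Real.sin_pos_of_pos_of_lt_pi hh0 (by linarith)
    have hmono1 : ∫ u in (0:ℝ)..h, Real.log u ≤ ∫ u in (0:ℝ)..h, f u := by
      apply intervalIntegral.integral_mono_on hh0.le hlogint' hJint
      intro u hu
      rcases eq_or_lt_of_le hu.1 with heq | hu0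
      · rw [← heq]; simp [hf]
      · show Real.log u ≤ Real.log (2*Real.sin u)
        exact Real.log_le_log hu0 (sin2_lb hu0.le (le_trans hu.2 hh2))
    have hmono2 : ∫ u in (0:ℝ)..h, f u
        ≤ ∫ u in (0:ℝ)..h, (Real.log u + Real.log 2) := by
      apply intervalIntegral.integral_mono_on hh0.le hJint
        (hlogint'.add intervalIntegrable_const)
      intro u hu
      rcases eq_or_lt_of_le hu.1 with heq | hu0
      · rw [← heq]
        have h2 : (0:ℝ) ≤ Real.log 2 := Real.log_nonneg (by norm_num)
        simpa [hf] using h2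
      · show f u ≤ Real.log u + Real.log 2
        have hub := sin2_ub hu0.le
        have hlb := sin2_lb hu0.le (le_trans hu.2 hh2)
        calc f u ≤ Real.log (2*u) := Real.log_le_log (lt_of_lt_of_le hu0 hlb) hub
          _ = Real.log 2 + Real.log u := Real.log_mul two_ne_zero hu0.ne'
          _ = Real.log u + Real.log 2 := by ring
    have hlogval : ∫ u in (0:ℝ)..h, Real.log u = h * Real.log h - h :=
      integral_log_eq hh0.le hh2'
    have haddval : ∫ u in (0:ℝ)..h, (Real.log u + Real.log 2)
        = h*Real.log h - h + h*Real.log 2 := by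
      rw [intervalIntegral.integral_add hlogint' intervalIntegrable_const, hlogval,
        intervalIntegral.integral_const, smul_eq_mul]
      ring
    set J := ∫ u in (0:ℝ)..h, f u with hJ_eq
    have hJ1 : h*Real.log h - h ≤ J := by rw [← hlogval]; exact hmono1
    have hJ2 : J ≤ h*Real.log h - h + h*Real.log 2 := by rw [← haddval]; exact hmono2
    have hfh_ub : f h ≤ L := by
      apply Real.log_le_log (by linarith)
      have := Real.sin_le_one h
      linarith
    have hfh_lb : -L ≤ f h := by
      have h1 : ((N:ℝ))⁻¹ ≤ 2*Real.sin h := by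
        have h2 : ((N:ℝ))⁻¹ ≤ h := by
          rw [hh, inv_eq_one_div]
          gcongr
          linarith [Real.pi_gt_three]
        linarith [sin2_lb hh0.le hh2]
      have := Real.log_le_log (by positivity) h1
      rwa [Real.log_inv] at this
    have hlh : Real.log h = Real.log π - L := by
      rw [hh, Real.log_div hπ.ne' hN0.ne']
    have hlπ1 : 0 ≤ Real.log π := Real.log_nonneg (by linarith [Real.pi_gt_three])
    have hlπ2 : Real.log π ≤ 2*Real.log 2 := by
      calc Real.log π ≤ Real.log 4 := Real.log_le_log hπ hπ4
        _ = 2*Real.log 2 := by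
          rw [show (4:ℝ) = 2^(2:ℕ) by norm_num, Real.log_pow]
          norm_num
    have hh_inv : 0 < 1/h := by positivity
    have hJu : (1/h)*J ≤ Real.log h - 1 + Real.log 2 := by
      have hm := mul_le_mul_of_nonneg_left hJ2 hh_inv.le
      have heq2 : (1/h)*(h*Real.log h - h + h*Real.log 2)
          = Real.log h - 1 + Real.log 2 := by field_simp
      rwa [heq2] at hm
    have hJl : Real.log h - 1 ≤ (1/h)*J := by
      have hm := mul_le_mul_of_nonneg_left hJ1 hh_inv.le
      have heq2 : (1/h)*(h*Real.log h - h) = Real.log h - 1 := by field_simp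
      rwa [heq2] at hm
    rw [abs_le]
    constructor
    · linarith
    · linarith
  -- assemble
  set t : ℕ → ℝ := fun k => f (((k:ℝ)+1)*h) - (1/h) * ∫ u in ((k:ℝ)*h)..(((k:ℝ)+1)*h), f u
    with ht_eq
  have hsplit : ∑ k ∈ Finset.range n, t k = t 0 + ∑ k ∈ Finset.Ico 1 n, t k := by
    rw [Finset.range_eq_Ico, ← Finset.sum_Ico_consecutive _ (Nat.zero_le 1) hn1]
    congr 1
    simp
  have ht0' : |t 0| ≤ 7*L := by
    have e0 : t 0 = f h - (1/h) * ∫ u in (0:ℝ)..h, f u := by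
      rw [ht_eq]; norm_num
    rw [e0]; exact ht0
  have hS : ∑ k ∈ Finset.Ico 1 n, |t k|
      ≤ ∑ k ∈ Finset.Ico 1 n, (1/(k:ℝ) + 1/((N:ℝ)-1-(k:ℝ))) := by
    apply Finset.sum_le_sum
    intro k hk
    rw [Finset.mem_Ico] at hk
    exact hbound k hk.1 hk.2
  have hS1 : ∑ k ∈ Finset.Ico 1 n, (1/(k:ℝ)) ≤ 1 + L := by
    apply harm_bound (N := N)
    intro i hi
    rw [Finset.mem_Ico] at hi
    rw [Finset.mem_Icc]
    omega
  have hS2 : ∑ k ∈ Finset.Ico 1 n, (1/((N:ℝ)-1-(k:ℝ))) ≤ 1 + L := by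
    have hcast : ∀ k ∈ Finset.Ico 1 n, (1/((N:ℝ)-1-(k:ℝ))) = 1/(((N-1-k : ℕ)):ℝ) := by
      intro k hk
      rw [Finset.mem_Ico] at hk
      congr 1
      rw [Nat.cast_sub (by omega), Nat.cast_sub (by omega), Nat.cast_one]
    rw [Finset.sum_congr rfl hcast]
    have hinj : ∀ x ∈ Finset.Ico 1 n, ∀ y ∈ Finset.Ico 1 n, N-1-x = N-1-y → x = y := by
      intro x hx y hy hxy
      rw [Finset.mem_Ico] at hx hy
      omega
    have himg := Finset.sum_image (s := Finset.Ico 1 n) (f := fun j : ℕ => 1/((j:ℝ)))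
      (g := fun k => N-1-k) hinj
    rw [← himg]
    apply harm_bound (N := N)
    intro j hj
    rw [Finset.mem_image] at hj
    obtain ⟨k, hk, rfl⟩ := hj
    rw [Finset.mem_Ico] at hk
    rw [Finset.mem_Icc]
    omega
  calc |∑ k ∈ Finset.range n, t k| ≤ |t 0| + |∑ k ∈ Finset.Ico 1 n, t k| := by
        rw [hsplit]; exact abs_add_le _ _
    _ ≤ |t 0| + ∑ k ∈ Finset.Ico 1 n, |t k| := by
        have := Finset.abs_sum_le_sum_abs (fun k => t k) (Finset.Ico 1 n)
        linarith
    _ ≤ 7*L + ((1 + L) + (1 + L)) := by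
        rw [Finset.sum_add_distrib] at hS
        linarith
    _ ≤ 20 * L := by linarith
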